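/- Let n ≥ 1, let x₁,…,x_n be real numbers, let y₁,…,y_n be pairwise distinct complex numbers, and let R > max_j |y_j|. Then the n-fold iterated contour integral over the circles |λ_i| = R (each traversed once counterclockwise) satisfies ∮_{|λ₁|=R} ⋯ ∮_{|λ_n|=R} det(e^{x_i λ_j})_{1≤i,j≤n} · det((λ_i − y_j)^{-1})_{1≤i,j≤n} dλ_n ⋯ dλ₁ = (2πi)^n · n! · det(e^{x_i y_j})_{1≤i,j≤n}. -/

import Mathlib

open Matrix Equiv

/-- The `n`-fold iterated contour integral
`∮_{|λ₁|=R} ⋯ ∮_{|λₙ|=R} f(λ₁,…,λₙ) dλₙ ⋯ dλ₁`, each circle centered at `0` with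
radius `R`, traversed once counterclockwise. -/
noncomputable def multiCircleIntegral : (n : ℕ) → ((Fin n → ℂ) → ℂ) → ℝ → ℂ
  | 0, f, _ => f ![]
  | n + 1, f, R => ∮ z in C(0, R), multiCircleIntegral n (fun w => f (Fin.cons z w)) R

lemma circleIntegral_finset_sum {ι : Type*} (S : Finset ι) (f : ι → ℂ → ℂ) {c : ℂ} {R : ℝ}
    (h : ∀ s ∈ S, CircleIntegrable (f s) c R) :
    (∮ z in C(c, R), ∑ s ∈ S, f s z) = ∑ s ∈ S, ∮ z in C(c, R), f s z := by
  simp only [circleIntegral, Finset.smul_sum]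
  rw [intervalIntegral.integral_finset_sum]
  exact fun s hs => (h s hs).out

/-- Key computation: the multi circle integral of a finite sum of products of
single-variable functions factorizes. -/
lemma multiCircle_sum_prod {ι : Type*} (R : ℝ) :
    ∀ (n : ℕ) (S : Finset ι) (c : ι → ℂ) (g : ι → Fin n → ℂ → ℂ),
      (∀ s ∈ S, ∀ k, CircleIntegrable (g s k) 0 R) →
      multiCircleIntegral n (fun l => ∑ s ∈ S, c s * ∏ k, g s k (l k)) R
        = ∑ s ∈ S, c s * ∏ k, (∮ z in C(0, R), g s k z) := by
  intro n
  induction n with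
  | zero => intro S c g _; simp [multiCircleIntegral]
  | succ n ih =>
    intro S c g hg
    rw [multiCircleIntegral]
    have key : ∀ z : ℂ,
        multiCircleIntegral n (fun w : Fin n → ℂ => ∑ s ∈ S, c s * ∏ k, g s k ((Fin.cons z w : Fin (n+1) → ℂ) k)) R
          = ∑ s ∈ S, (c s * ∏ k : Fin n, (∮ ζ in C(0, R), g s k.succ ζ)) * g s 0 z := by
      intro z
      have h1 : (fun w : Fin n → ℂ => ∑ s ∈ S, c s * ∏ k, g s k ((Fin.cons z w : Fin (n+1) → ℂ) k))
          = fun w => ∑ s ∈ S, (c s * g s 0 z) * ∏ k : Fin n, g s k.succ (w k) := by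
        funext w
        refine Finset.sum_congr rfl fun s _ => ?_
        rw [Fin.prod_univ_succ]
        simp [mul_assoc]
      rw [h1, ih S (fun s => c s * g s 0 z) (fun s k => g s k.succ)
        (fun s hs k => hg s hs k.succ)]
      refine Finset.sum_congr rfl fun s _ => ?_
      ring
    simp only [key]
    rw [circleIntegral_finset_sum S
      (fun s z => (c s * ∏ k : Fin n, (∮ ζ in C(0, R), g s k.succ ζ)) * g s 0 z)
      (fun s hs => (hg s hs 0).const_mul _)]
    refine Finset.sum_congr rfl fun s hs => ?_
    rw [circleIntegral.integral_const_mul, Fin.prod_univ_succ]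
    ring

/-- `β = 1` duality check: for `x ∈ ℝⁿ`, pairwise distinct complex
`y₁,…,yₙ`, and `R > maxⱼ |yⱼ|`,
`∮⋯∮ det(e^{xᵢλⱼ}) det((λᵢ−yⱼ)⁻¹) dλₙ⋯dλ₁ = (2πi)ⁿ n! det(e^{xᵢyⱼ})`. -/
theorem statement18 (n : ℕ) (hn : 1 ≤ n) (x : Fin n → ℝ) (y : Fin n → ℂ)
    (hy : ∀ i j : Fin n, i ≠ j → y i ≠ y j) (R : ℝ) (hR : ∀ j, ‖y j‖ < R) :
    multiCircleIntegral n
      (fun l => (Matrix.of fun i j => Complex.exp ((x i : ℂ) * l j)).det *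
        (Matrix.of fun i j : Fin n => (l i - y j)⁻¹).det) R =
    (2 * Real.pi * Complex.I) ^ n * (Nat.factorial n : ℂ) *
      (Matrix.of fun i j => Complex.exp ((x i : ℂ) * y j)).det := by
  have hR0 : 0 < R := lt_of_le_of_lt (norm_nonneg (y ⟨0, hn⟩)) (hR ⟨0, hn⟩)
  -- the single-variable Cauchy integral
  have cauchy : ∀ (a w : ℂ), ‖w‖ < R →
      (∮ z in C(0, R), Complex.exp (a * z) * (z - w)⁻¹)
        = 2 * Real.pi * Complex.I * Complex.exp (a * w) := by
    intro a w hw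
    have hd : DiffContOnCl ℂ (fun z => Complex.exp (a * z)) (Metric.ball 0 R) :=
      (((differentiable_const a).mul differentiable_id).cexp).diffContOnCl
    have hw' : w ∈ Metric.ball (0 : ℂ) R := by
      simpa [Metric.mem_ball, Complex.dist_eq] using hw
    have h := hd.circleIntegral_sub_inv_smul hw'
    calc (∮ z in C(0, R), Complex.exp (a * z) * (z - w)⁻¹)
        = ∮ z in C(0, R), (z - w)⁻¹ • Complex.exp (a * z) := by
          simp only [smul_eq_mul]; congr 1; funext z; ring
      _ = (2 * (Real.pi : ℂ) * Complex.I) • Complex.exp (a * w) := h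
      _ = _ := by rw [smul_eq_mul]
  classical
  set g : (Perm (Fin n) × Perm (Fin n)) → Fin n → ℂ → ℂ :=
    fun p k z => Complex.exp ((x (p.1 k) : ℂ) * z) * (z - y (p.2 k))⁻¹ with hg
  have hint : ∀ p ∈ (Finset.univ : Finset (Perm (Fin n) × Perm (Fin n))), ∀ k,
      CircleIntegrable (g p k) 0 R := by
    intro p _ k
    refine ContinuousOn.circleIntegrable hR0.le ?_
    refine ContinuousOn.mul (Continuous.continuousOn (by fun_prop)) ?_
    intro z hz
    refine ContinuousAt.continuousWithinAt ?_
    refine ContinuousAt.inv₀ (by fun_prop) ?_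
    intro hzero
    have hzy : z = y (p.2 k) := by linear_combination hzero
    have : ‖z‖ = R := by simpa using hz
    rw [hzy] at this
    exact absurd this (ne_of_lt (hR _))
  have expand : (fun l : Fin n → ℂ =>
      (Matrix.of fun i j => Complex.exp ((x i : ℂ) * l j)).det *
        (Matrix.of fun i j : Fin n => (l i - y j)⁻¹).det)
      = fun l => ∑ p : Perm (Fin n) × Perm (Fin n),
          (((p.1.sign : ℤ) : ℂ) * ((p.2.sign : ℤ) : ℂ)) * ∏ k, g p k (l k) := by
    funext l
    rw [← Matrix.det_transpose (Matrix.of fun i j : Fin n => (l i - y j)⁻¹),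
      Matrix.det_apply', Matrix.det_apply', Finset.sum_mul_sum, Fintype.sum_prod_type]
    refine Finset.sum_congr rfl fun σ _ => Finset.sum_congr rfl fun τ _ => ?_
    simp only [hg, Matrix.transpose_apply, Matrix.of_apply, Finset.prod_mul_distrib]
    ring
  rw [expand, multiCircle_sum_prod R n Finset.univ _ g hint]
  have val : ∀ p : Perm (Fin n) × Perm (Fin n), ∀ k : Fin n,
      (∮ z in C(0, R), g p k z)
        = 2 * Real.pi * Complex.I * Complex.exp ((x (p.1 k) : ℂ) * y (p.2 k)) :=
    fun p k => cauchy _ _ (hR _)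
  simp only [val, Finset.prod_mul_distrib, Finset.prod_const, Finset.card_univ,
    Fintype.card_fin]
  rw [Fintype.sum_prod_type_right]
  have inner : ∀ τ : Perm (Fin n),
      (∑ σ : Perm (Fin n), ((σ.sign : ℤ) : ℂ) * ((τ.sign : ℤ) : ℂ) *
        (2 ^ n * (Real.pi : ℂ) ^ n * Complex.I ^ n *
          ∏ k, Complex.exp ((x (σ k) : ℂ) * y (τ k))))
      = 2 ^ n * (Real.pi : ℂ) ^ n * Complex.I ^ n *
          (Matrix.of fun i j => Complex.exp ((x i : ℂ) * y j)).det := by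
    intro τ
    rw [← Equiv.sum_comp (Equiv.mulRight τ)
      (fun σ : Perm (Fin n) => ((σ.sign : ℤ) : ℂ) * ((τ.sign : ℤ) : ℂ) *
        (2 ^ n * (Real.pi : ℂ) ^ n * Complex.I ^ n *
          ∏ k, Complex.exp ((x (σ k) : ℂ) * y (τ k)))),
      Matrix.det_apply', Finset.mul_sum]
    refine Finset.sum_congr rfl fun ρ _ => ?_
    simp only [Equiv.coe_mulRight, Equiv.Perm.sign_mul, Equiv.Perm.mul_apply,
      Matrix.of_apply]
    have h2 : (∏ k, Complex.exp ((x (ρ (τ k)) : ℂ) * y (τ k)))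
        = ∏ i, Complex.exp ((x (ρ i) : ℂ) * y i) :=
      Equiv.prod_comp τ (fun t => Complex.exp ((x (ρ t) : ℂ) * y t))
    rw [h2]
    have h3 : ((τ.sign : ℤ) : ℂ) * ((τ.sign : ℤ) : ℂ) = 1 := by
      rcases Int.units_eq_one_or τ.sign with h | h <;> simp [h]
    have h4 : (((ρ.sign * τ.sign : ℤˣ) : ℤ) : ℂ) = ((ρ.sign : ℤ) : ℂ) * ((τ.sign : ℤ) : ℂ) := by
      push_cast [Units.val_mul]; ring
    rw [h4]
    linear_combination (((ρ.sign : ℤ) : ℂ) *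
      (2 ^ n * (Real.pi : ℂ) ^ n * Complex.I ^ n *
        ∏ i, Complex.exp ((x (ρ i) : ℂ) * y i))) * h3
  calc _ = ∑ _τ : Perm (Fin n), 2 ^ n * (Real.pi : ℂ) ^ n * Complex.I ^ n *
          (Matrix.of fun i j => Complex.exp ((x i : ℂ) * y j)).det :=
        Finset.sum_congr rfl fun τ _ => inner τ
    _ = _ := by
        rw [Finset.sum_const, Finset.card_univ, Fintype.card_perm, Fintype.card_fin,
          nsmul_eq_mul]
        ring
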